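/- Let ξ₁,...,ξ_d be i.i.d. standard Gaussian, σ > 0, 1 ≤ s < d, a > 0, and let θ ∈ ℝ^d have exactly s nonzero components, each satisfying θ_j ≥ a. Define X_j = θ_j + σξ_j, the threshold t = a/2 + (σ²/a)·log(d/s - 1), the selector η̂⁺_j = 1{X_j ≥ t}, and η_j = 1{θ_j ≠ 0}. Then (1/s)·E[Σ_{j=1}^d |η̂⁺_j - η_j|] ≤ (d/s - 1)·Φ(-t/σ) + Φ((t-a)/σ), and the right-hand side equals Ψ₊(d,s,a) = (d/s-1)·Φ(-a/(2σ) - (σ/a)·log(d/s-1)) + Φ(-a/(2σ) + (σ/a)·log(d/s-1)). -/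

import Mathlib

open MeasureTheory ProbabilityTheory

/-- The standard Gaussian cumulative distribution function. -/
noncomputable def Phi (x : ℝ) : ℝ :=
  (Real.sqrt (2 * Real.pi))⁻¹ * ∫ u in Set.Iic x, Real.exp (-u ^ 2 / 2)

/-- Minimax risk expression for the one-sided sparsity class `Θ_d⁺(s,a)`. -/
noncomputable def PsiPlus (d s : ℕ) (a σ : ℝ) : ℝ :=
  ((d : ℝ) / s - 1) * Phi (-(a / (2 * σ)) - (σ / a) * Real.log ((d : ℝ) / s - 1))
    + Phi (-(a / (2 * σ)) + (σ / a) * Real.log ((d : ℝ) / s - 1))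

/-- The law of the observation vector `X = θ + σξ` with i.i.d. standard Gaussian `ξ_j`:
the product of Gaussian measures `N(θ_j, σ²)`. -/
noncomputable def Pmodel (d : ℕ) (σ : ℝ) (θ : Fin d → ℝ) : Measure (Fin d → ℝ) :=
  Measure.pi fun j => gaussianReal (θ j) (Real.toNNReal (σ ^ 2))

lemma std_Iic (z : ℝ) : ((gaussianReal 0 1) (Set.Iic z)).toReal = Phi z := by
  rw [gaussianReal_apply_eq_integral 0 one_ne_zero,
    ENNReal.toReal_ofReal (integral_nonneg fun x => gaussianPDFReal_nonneg _ _ _)]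
  unfold Phi gaussianPDFReal
  rw [← integral_const_mul]
  norm_num

lemma gauss_map_std (m σ c : ℝ) (hc : c ^ 2 * σ ^ 2 = 1) :
    (gaussianReal m (Real.toNNReal (σ ^ 2))).map (fun y => c * (y + -m)) = gaussianReal 0 1 := by
  have h1 : (fun y => c * (y + -m)) = (fun y => c * y) ∘ (fun y => y + -m) := rfl
  rw [h1, ← Measure.map_map (measurable_const_mul c) (measurable_add_const (-m)),
    gaussianReal_map_add_const, add_neg_cancel, gaussianReal_map_const_mul, mul_zero]
  congr 1
  rw [← NNReal.coe_inj]
  push_cast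
  rw [Real.coe_toNNReal _ (sq_nonneg σ)]
  simpa using hc

lemma gauss_real_Iic (m σ : ℝ) (hσ : 0 < σ) (x : ℝ) :
    ((gaussianReal m (Real.toNNReal (σ ^ 2))) (Set.Iic x)).toReal = Phi ((x - m) / σ) := by
  have hc : (σ⁻¹) ^ 2 * σ ^ 2 = 1 := by field_simp
  have h := gauss_map_std m σ σ⁻¹ hc
  have hpre : (fun y => σ⁻¹ * (y + -m)) ⁻¹' Set.Iic ((x - m) / σ) = Set.Iic x := by
    ext y
    simp only [Set.mem_preimage, Set.mem_Iic, div_eq_inv_mul]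
    rw [mul_le_mul_iff_right₀ (inv_pos.mpr hσ)]
    constructor <;> intro h <;> linarith
  rw [← std_Iic, ← h, Measure.map_apply (by fun_prop) measurableSet_Iic, hpre]

lemma gauss_real_Ici (m σ : ℝ) (hσ : 0 < σ) (x : ℝ) :
    ((gaussianReal m (Real.toNNReal (σ ^ 2))) (Set.Ici x)).toReal = Phi (-((x - m) / σ)) := by
  have hc : (-σ⁻¹) ^ 2 * σ ^ 2 = 1 := by field_simp
  have h := gauss_map_std m σ (-σ⁻¹) hc
  have hpre : (fun y => -σ⁻¹ * (y + -m)) ⁻¹' Set.Iic (-((x - m) / σ)) = Set.Ici x := by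
    ext y
    simp only [Set.mem_preimage, Set.mem_Iic, Set.mem_Ici, div_eq_inv_mul, neg_mul,
      neg_le_neg_iff]
    rw [mul_le_mul_iff_right₀ (inv_pos.mpr hσ)]
    constructor <;> intro h <;> linarith
  rw [← std_Iic, ← h, Measure.map_apply (by fun_prop) measurableSet_Iic, hpre]

lemma Phi_mono : Monotone Phi := by
  intro x y hxy
  unfold Phi
  gcongr (Real.sqrt (2 * Real.pi))⁻¹ * ?_
  refine setIntegral_mono_set ?_ ?_ (HasSubset.Subset.eventuallyLE (Set.Iic_subset_Iic.mpr hxy))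
  · have : (fun u : ℝ => Real.exp (-u ^ 2 / 2)) = fun u => Real.exp (-(1/2) * u ^ 2) := by
      ext u; ring_nf
    rw [this]
    exact (integrable_exp_neg_mul_sq (by norm_num)).integrableOn
  · exact Filter.Eventually.of_forall fun u => (Real.exp_pos _).le

lemma pi_eval {d : ℕ} (μ : Fin d → Measure ℝ) [∀ i, IsProbabilityMeasure (μ i)]
    (j : Fin d) (A : Set ℝ) :
    Measure.pi μ (Function.eval j ⁻¹' A) = μ j A := by
  classical
  rw [Set.eval_preimage, Measure.pi_pi, Fintype.prod_eq_single j (fun i hi => by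
    rw [Function.update_of_ne hi]; simp)]
  rw [Function.update_self]

theorem risk_bound_one_sided (d s : ℕ) (hs : 1 ≤ s) (hsd : s < d) (a σ : ℝ)
    (ha : 0 < a) (hσ : 0 < σ) (θ : Fin d → ℝ)
    (hcard : (Finset.univ.filter fun j => θ j ≠ 0).card = s)
    (hθ : ∀ j, θ j ≠ 0 → a ≤ θ j)
    (t : ℝ) (ht : t = a / 2 + σ ^ 2 / a * Real.log ((d : ℝ) / s - 1)) :
    (1 / (s : ℝ)) * ∫ x, (∑ j, |(if t ≤ x j then (1 : ℝ) else 0)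
        - (if θ j ≠ 0 then (1 : ℝ) else 0)|) ∂(Pmodel d σ θ)
      ≤ ((d : ℝ) / s - 1) * Phi (-(t / σ)) + Phi ((t - a) / σ)
    ∧ ((d : ℝ) / s - 1) * Phi (-(t / σ)) + Phi ((t - a) / σ) = PsiPlus d s a σ := by
  classical
  have hσ2 : (Real.toNNReal (σ ^ 2)) ≠ 0 := by
    simp only [ne_eq, Real.toNNReal_eq_zero, not_le]
    positivity
  have hs0 : (0 : ℝ) < s := by exact_mod_cast hs
  set V := Real.toNNReal (σ ^ 2) with hV
  set A : Fin d → Set ℝ := fun j => if θ j ≠ 0 then Set.Iio t else Set.Ici t with hA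
  -- pointwise identification of the loss with indicators
  have hind : ∀ (x : Fin d → ℝ) (j : Fin d),
      |(if t ≤ x j then (1 : ℝ) else 0) - (if θ j ≠ 0 then (1 : ℝ) else 0)|
        = (Function.eval (β := fun _ : Fin d => ℝ) j ⁻¹' A j).indicator (fun _ => (1 : ℝ)) x := by
    intro x j
    rw [Set.indicator_apply]
    by_cases h : θ j ≠ 0
    · by_cases h2 : t ≤ x j
      · simp [hA, h, h2, not_lt.mpr h2]
      · simp [hA, h, h2, not_le.mp h2]
    · by_cases h2 : t ≤ x j
      · simp [hA, not_not.mp h, h2]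
      · simp [hA, not_not.mp h, h2]
  have hprob : IsProbabilityMeasure (Pmodel d σ θ) := by
    unfold Pmodel; infer_instance
  have hsum : (∫ x, (∑ j, |(if t ≤ x j then (1 : ℝ) else 0)
        - (if θ j ≠ 0 then (1 : ℝ) else 0)|) ∂(Pmodel d σ θ))
      = ∑ j, ((gaussianReal (θ j) V) (A j)).toReal := by
    have hAset : ∀ j, MeasurableSet (A j) := by
      intro j
      by_cases h : θ j ≠ 0
      · have : A j = Set.Iio t := by simp [hA, h]
        rw [this]; exact measurableSet_Iio
      · have : A j = Set.Ici t := by simp [hA, h]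
        rw [this]; exact measurableSet_Ici
    have hmeas : ∀ j, MeasurableSet (Function.eval (β := fun _ : Fin d => ℝ) j ⁻¹' A j) := by
      intro j
      exact measurable_pi_apply j (hAset j)
    calc (∫ x, (∑ j, |(if t ≤ x j then (1 : ℝ) else 0)
        - (if θ j ≠ 0 then (1 : ℝ) else 0)|) ∂(Pmodel d σ θ))
        = ∫ x, (∑ j, (Function.eval (β := fun _ : Fin d => ℝ) j ⁻¹' A j).indicator (fun _ => (1 : ℝ)) x)
            ∂(Pmodel d σ θ) := by
          simp_rw [hind]
      _ = ∑ j, ∫ x, (Function.eval (β := fun _ : Fin d => ℝ) j ⁻¹' A j).indicator (fun _ => (1 : ℝ)) x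
            ∂(Pmodel d σ θ) := by
          refine integral_finset_sum _ fun j _ => ?_
          exact (integrable_const (1 : ℝ)).indicator (hmeas j)
      _ = ∑ j, ((Pmodel d σ θ) (Function.eval (β := fun _ : Fin d => ℝ) j ⁻¹' A j)).toReal := by
          refine Finset.sum_congr rfl fun j _ => ?_
          rw [integral_indicator_const (1 : ℝ) (hmeas j), smul_eq_mul, mul_one, measureReal_def]
      _ = ∑ j, ((gaussianReal (θ j) V) (A j)).toReal := by
          refine Finset.sum_congr rfl fun j _ => ?_
          rw [Pmodel, pi_eval]
  -- value of each term
  have hIio : ∀ m : ℝ, gaussianReal m V (Set.Iio t) = gaussianReal m V (Set.Iic t) := by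
    intro m
    have h0 : gaussianReal m V {t} = 0 :=
      gaussianReal_absolutelyContinuous m hσ2 (measure_singleton t)
    rw [← Set.Iic_diff_right, measure_diff_null h0]
  have hterm : ∀ j : Fin d, ((gaussianReal (θ j) V) (A j)).toReal
      ≤ if θ j ≠ 0 then Phi ((t - a) / σ) else Phi (-(t / σ)) := by
    intro j
    by_cases h : θ j ≠ 0
    · have hAj : A j = Set.Iio t := by simp [hA, h]
      have hif : (if θ j ≠ 0 then Phi ((t - a) / σ) else Phi (-(t / σ)))
          = Phi ((t - a) / σ) := by simp [h]
      rw [hAj, hif, hIio, hV, gauss_real_Iic _ _ hσ]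
      refine Phi_mono ?_
      gcongr
      exact hθ j h
    · have hAj : A j = Set.Ici t := by simp [hA, h]
      have hif : (if θ j ≠ 0 then Phi ((t - a) / σ) else Phi (-(t / σ)))
          = Phi (-(t / σ)) := by simp [h]
      push_neg at h
      rw [hAj, hif, hV, h, gauss_real_Ici _ _ hσ, sub_zero]
  -- sum the bounds
  have hcard2 : (Finset.univ.filter fun j => ¬ θ j ≠ 0).card = d - s := by
    have := Finset.card_filter_add_card_filter_not
      (s := (Finset.univ : Finset (Fin d))) (p := fun j => θ j ≠ 0)
    rw [hcard, Finset.card_univ, Fintype.card_fin] at this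
    omega
  have hsumle : (∑ j, ((gaussianReal (θ j) V) (A j)).toReal)
      ≤ ((d : ℝ) - s) * Phi (-(t / σ)) + s * Phi ((t - a) / σ) := by
    calc (∑ j, ((gaussianReal (θ j) V) (A j)).toReal)
        ≤ ∑ j, (if θ j ≠ 0 then Phi ((t - a) / σ) else Phi (-(t / σ))) :=
          Finset.sum_le_sum fun j _ => hterm j
      _ = ((d : ℝ) - s) * Phi (-(t / σ)) + s * Phi ((t - a) / σ) := by
          rw [Finset.sum_ite, Finset.sum_const, Finset.sum_const, hcard, hcard2]
          have : ((d - s : ℕ) : ℝ) = (d : ℝ) - s := by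
            push_cast [Nat.cast_sub hsd.le]; ring
          simp [nsmul_eq_mul, this]
          ring
  constructor
  · calc (1 / (s : ℝ)) * ∫ x, (∑ j, |(if t ≤ x j then (1 : ℝ) else 0)
        - (if θ j ≠ 0 then (1 : ℝ) else 0)|) ∂(Pmodel d σ θ)
        ≤ (1 / (s : ℝ)) * (((d : ℝ) - s) * Phi (-(t / σ)) + s * Phi ((t - a) / σ)) := by
          rw [hsum]
          exact mul_le_mul_of_nonneg_left hsumle (by positivity)
      _ = ((d : ℝ) / s - 1) * Phi (-(t / σ)) + Phi ((t - a) / σ) := by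
          field_simp
  · have h1 : -(t / σ) = -(a / (2 * σ)) - σ / a * Real.log ((d : ℝ) / s - 1) := by
      rw [ht]; field_simp; ring
    have h2 : (t - a) / σ = -(a / (2 * σ)) + σ / a * Real.log ((d : ℝ) / s - 1) := by
      rw [ht]; field_simp; ring
    rw [PsiPlus, h1, h2]
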